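/- Let X be a compact metric space and B an open subset of X. If B is intersected by infinitely many pairwise disjoint clopen subsets of X, then the closure of B contains a point z such that every neighbourhood of z is intersected by infinitely many pairwise disjoint clopen subsets of X. -/

import Mathlib

/-- In a compact metric space, if an open set `B` is intersected by
infinitely many pairwise disjoint clopen subsets of `X`, then the closure of `B`
contains a point `z` every neighbourhood of which is intersected by infinitely many
pairwise disjoint clopen subsets of `X` (i.e. a "proper" point). -/
theorem stmt_0 {X : Type*} [MetricSpace X] [CompactSpace X] (B : Set X) (hB : IsOpen B)
    (h : ∃ C : ℕ → Set X, (∀ i, IsClopen (C i)) ∧ Pairwise (Function.onFun Disjoint C) ∧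
      ∀ i, (C i ∩ B).Nonempty) :
    ∃ z ∈ closure B, ∀ U ∈ nhds z, ∃ C : ℕ → Set X, (∀ i, IsClopen (C i)) ∧
      Pairwise (Function.onFun Disjoint C) ∧ ∀ i, (C i ∩ U).Nonempty := by
  obtain ⟨C, hclopen, hdisj, hne⟩ := h
  choose x hxC hxB using hne
  have hcl : IsCompact (closure B) := isClosed_closure.isCompact
  obtain ⟨z, hz, φ, hφ, htend⟩ :=
    hcl.tendsto_subseq (fun n => subset_closure (hxB n))
  refine ⟨z, hz, fun U hU => ?_⟩
  have hev : ∀ᶠ n in Filter.atTop, x (φ n) ∈ U := htend.eventually_mem hU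
  obtain ⟨N, hN⟩ := hev.exists_forall_of_atTop
  refine ⟨fun n => C (φ (N + n)), fun n => hclopen _, ?_, fun n => ⟨x (φ (N + n)),
    hxC _, hN _ (Nat.le_add_right N n)⟩⟩
  intro i j hij
  exact hdisj (hφ.injective.ne (fun hc => hij (by omega)))
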